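/- Let σ be a finite type and let f ∈ MvPowerSeries σ ℤ[t] have constant coefficient 1, with product-form exponent family m. Write P_λ ∈ ℤ[t] for the coefficient of X^λ in f, and for a positive integer k let P_λ(t^k) denote the composition of the polynomial P_λ with t^k. Then for every nonzero exponent vector d: ∑_{(k,κ) : d = k·κ} ht(κ) · (∑_{n≥0} m(κ,n) t^{kn}) = ∑ (−1)^r · ht(λ₁) · ∏_{i=1}^r P_{λᵢ}, where the left sum is over pairs of a positive integer k and a nonzero exponent vector κ with d = k·κ, and the right sum is over all nonempty lists (λ₁, …, λ_r) of nonzero exponent vectors with λ₁ + ⋯ + λ_r = d. -/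

import Mathlib

/-- Integer powers of a multivariate power series whose constant coefficient is `1`:
nonnegative powers are ordinary powers, negative powers are powers of the inverse
`MvPowerSeries.invOfUnit f 1`. -/
noncomputable def zpowSeries {σ : Type*} {R : Type*} [CommRing R]
    (f : MvPowerSeries σ R) (n : ℤ) : MvPowerSeries σ R :=
  if 0 ≤ n then f ^ n.toNat else (MvPowerSeries.invOfUnit f 1) ^ (-n).toNat

/-- The height of an exponent vector: its total degree `∑ᵢ d i`. -/
def htv {σ : Type*} (d : σ →₀ ℕ) : ℕ := d.sum fun _ n => n

open MvPowerSeries Finset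

section basic
variable {σ : Type*} {R : Type*} [CommRing R]

lemma htv_add (a b : σ →₀ ℕ) : htv (a + b) = htv a + htv b :=
  Finsupp.sum_add_index' (fun _ => rfl) (fun _ _ _ => rfl)

@[simp] lemma htv_zero : htv (0 : σ →₀ ℕ) = 0 := Finsupp.sum_zero_index

lemma htv_eq_zero_iff {d : σ →₀ ℕ} : htv d = 0 ↔ d = 0 := by
  constructor
  · intro h
    ext s
    by_contra hs
    have hmem : s ∈ d.support := Finsupp.mem_support_iff.2 (by simpa using hs)
    have := Finset.sum_eq_zero_iff.1 h s hmem
    simp at this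
    exact hs (by simp [this])
  · rintro rfl; simp

lemma htv_pos {d : σ →₀ ℕ} (hd : d ≠ 0) : 0 < htv d :=
  Nat.pos_of_ne_zero (fun h => hd (htv_eq_zero_iff.1 h))

lemma htv_smul (k : ℕ) (a : σ →₀ ℕ) : htv (k • a) = k * htv a := by
  induction k with
  | zero => simp
  | succ n ih => rw [succ_nsmul, htv_add, ih]; ring

lemma smul_right_injective_of_ne {lam : σ →₀ ℕ} (h : lam ≠ 0) {j k : ℕ}
    (hjk : j • lam = k • lam) : j = k := by
  have := congrArg htv hjk
  rw [htv_smul, htv_smul] at this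
  exact Nat.eq_of_mul_eq_mul_right (htv_pos h) this

noncomputable def Dop (f : MvPowerSeries σ R) : MvPowerSeries σ R :=
  fun d => (htv d : R) * MvPowerSeries.coeff (R := R) d f

lemma coeff_Dop (f : MvPowerSeries σ R) (d : σ →₀ ℕ) :
    coeff (R := R) d (Dop f) = (htv d : R) * coeff (R := R) d f := rfl

lemma Dop_one : Dop (1 : MvPowerSeries σ R) = 0 := by
  ext d
  classical
  rw [coeff_Dop, coeff_one]
  split_ifs with h
  · subst h; simp
  · simp

lemma Dop_mul (f g : MvPowerSeries σ R) : Dop (f * g) = Dop f * g + f * Dop g := by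
  ext d
  classical
  rw [map_add, coeff_Dop, coeff_mul, coeff_mul, coeff_mul, Finset.mul_sum,
    ← Finset.sum_add_distrib]
  refine Finset.sum_congr rfl fun p hp => ?_
  rw [Finset.HasAntidiagonal.mem_antidiagonal] at hp
  rw [coeff_Dop, coeff_Dop, ← hp, htv_add]
  push_cast
  ring

end basic

section dlog
variable {σ : Type*} {R : Type*} [CommRing R]

lemma inv_unique' {h a b : MvPowerSeries σ R} (ha : h * a = 1) (hb : h * b = 1) : a = b := by
  calc a = a * (h * b) := by rw [hb, mul_one]
    _ = (h * a) * b := by ring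
    _ = b := by rw [ha, one_mul]

noncomputable def Dlog (f : MvPowerSeries σ R) : MvPowerSeries σ R :=
  Dop f * MvPowerSeries.invOfUnit f 1

lemma mul_inv_one {f : MvPowerSeries σ R} (hf : constantCoeff (σ := σ) (R := R) f = 1) :
    f * MvPowerSeries.invOfUnit f 1 = 1 :=
  MvPowerSeries.mul_invOfUnit f 1 (by rw [hf]; rfl)

lemma Dlog_one : Dlog (1 : MvPowerSeries σ R) = 0 := by
  rw [Dlog, Dop_one, zero_mul]

lemma Dlog_mul {f g : MvPowerSeries σ R} (hf : constantCoeff (σ := σ) (R := R) f = 1)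
    (hg : constantCoeff (σ := σ) (R := R) g = 1) : Dlog (f * g) = Dlog f + Dlog g := by
  have hfg : constantCoeff (σ := σ) (R := R) (f * g) = 1 := by rw [map_mul, hf, hg, mul_one]
  have h1 : (f * g) * (invOfUnit f 1 * invOfUnit g 1) = 1 := by
    have := mul_inv_one hf
    have := mul_inv_one hg
    calc (f * g) * (invOfUnit f 1 * invOfUnit g 1)
        = (f * invOfUnit f 1) * (g * invOfUnit g 1) := by ring
      _ = 1 := by rw [mul_inv_one hf, mul_inv_one hg, mul_one]
  have h2 : invOfUnit (f * g) 1 = invOfUnit f 1 * invOfUnit g 1 :=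
    inv_unique' (mul_inv_one hfg) h1
  rw [Dlog, Dop_mul, h2, Dlog, Dlog]
  linear_combination (Dop f * invOfUnit f 1) * mul_inv_one hg +
    (Dop g * invOfUnit g 1) * mul_inv_one hf

lemma Dlog_pow {f : MvPowerSeries σ R} (hf : constantCoeff (σ := σ) (R := R) f = 1) (n : ℕ) :
    Dlog (f ^ n) = n • Dlog f := by
  induction n with
  | zero => simpa using Dlog_one
  | succ k ih =>
      have hfk : constantCoeff (σ := σ) (R := R) (f ^ k) = 1 := by rw [map_pow, hf, one_pow]
      rw [pow_succ, Dlog_mul hfk hf, ih, succ_nsmul]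

lemma constantCoeff_inv_one {f : MvPowerSeries σ R} :
    constantCoeff (σ := σ) (R := R) (invOfUnit f 1) = 1 := by
  rw [MvPowerSeries.constantCoeff_invOfUnit]; simp

lemma Dlog_inv {f : MvPowerSeries σ R} (hf : constantCoeff (σ := σ) (R := R) f = 1) :
    Dlog (invOfUnit f 1) = -Dlog f := by
  have h := Dlog_mul hf (constantCoeff_inv_one (f := f))
  rw [mul_inv_one hf, Dlog_one] at h
  linear_combination -h

lemma Dlog_zpow {f : MvPowerSeries σ R} (hf : constantCoeff (σ := σ) (R := R) f = 1) (k : ℤ) :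
    Dlog (zpowSeries f k) = k • Dlog f := by
  rw [zpowSeries]
  split_ifs with h
  · rw [Dlog_pow hf, ← natCast_zsmul, Int.toNat_of_nonneg h]
  · have hk : k = -(((-k).toNat : ℤ)) := by omega
    rw [Dlog_pow (constantCoeff_inv_one (f := f)), Dlog_inv hf, smul_neg]
    conv_rhs => rw [hk, neg_zsmul, natCast_zsmul]

end dlog

section geom
variable {σ : Type*} {R : Type*} [CommRing R]

open Classical in
noncomputable def geomS (lam : σ →₀ ℕ) (c : R) : MvPowerSeries σ R :=
  fun μ => if (∃ k : ℕ, μ = k • lam) then c ^ (htv μ / htv lam) else 0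

open Classical in
lemma coeff_geomS (lam : σ →₀ ℕ) (c : R) (μ : σ →₀ ℕ) :
    coeff (R := R) μ (geomS lam c) =
      if (∃ k : ℕ, μ = k • lam) then c ^ (htv μ / htv lam) else 0 := rfl

lemma htv_div (lam : σ →₀ ℕ) (h : lam ≠ 0) (k : ℕ) : htv (k • lam) / htv lam = k := by
  rw [htv_smul, Nat.mul_div_cancel _ (htv_pos h)]

lemma coeff_geomS_smul {lam : σ →₀ ℕ} (h : lam ≠ 0) (c : R) (k : ℕ) :
    coeff (R := R) (k • lam) (geomS lam c) = c ^ k := by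
  rw [coeff_geomS, if_pos ⟨k, rfl⟩, htv_div lam h]

lemma coeff_geomS_of_not {lam μ : σ →₀ ℕ} (c : R) (h : ¬ ∃ k : ℕ, μ = k • lam) :
    coeff (R := R) μ (geomS lam c) = 0 := by
  rw [coeff_geomS, if_neg h]

lemma smul_ne_zero_of {lam : σ →₀ ℕ} (h : lam ≠ 0) (k : ℕ) : (k + 1) • lam ≠ 0 := by
  intro hk
  have h2 := htv_eq_zero_iff.2 hk
  rw [htv_smul] at h2
  rcases Nat.mul_eq_zero.1 h2 with h' | h'
  · omega
  · exact h (htv_eq_zero_iff.1 h')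

lemma le_succ_smul (lam : σ →₀ ℕ) (k : ℕ) : lam ≤ (k + 1) • lam := by
  rw [succ_nsmul]
  exact le_add_self

lemma succ_smul_sub (lam : σ →₀ ℕ) (k : ℕ) : (k + 1) • lam - lam = k • lam := by
  rw [succ_nsmul]
  exact add_tsub_cancel_right _ _

lemma u_mul_geomS {lam : σ →₀ ℕ} (h : lam ≠ 0) (c : R) :
    (1 - monomial (R := R) lam c) * geomS lam c = 1 := by
  classical
  ext μ
  rw [sub_mul, one_mul, map_sub, MvPowerSeries.coeff_monomial_mul, coeff_one]
  by_cases hμ : ∃ k : ℕ, μ = k • lam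
  · obtain ⟨k, rfl⟩ := hμ
    cases k with
    | zero =>
        simp only [zero_smul]
        have hg : coeff (R := R) (0 : σ →₀ ℕ) (geomS lam c) = 1 := by
          simpa using coeff_geomS_smul h c 0
        have hl : ¬ lam ≤ (0 : σ →₀ ℕ) := by simpa using h
        rw [if_neg hl, hg]
        simp
    | succ j =>
        rw [if_neg (smul_ne_zero_of h j), if_pos (le_succ_smul lam j), succ_smul_sub,
          coeff_geomS_smul h, coeff_geomS_smul h, pow_succ]
        ring
  · have h0 : μ ≠ 0 := fun hh => hμ ⟨0, by simp [hh]⟩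
    rw [if_neg h0, coeff_geomS_of_not c hμ]
    split_ifs with hle
    · have : ¬ ∃ k : ℕ, μ - lam = k • lam := by
        rintro ⟨k, hk⟩
        exact hμ ⟨k + 1, by rw [← tsub_add_cancel_of_le hle, hk, succ_nsmul]⟩
      rw [coeff_geomS_of_not c this]
      ring
    · ring

lemma constantCoeff_u {lam : σ →₀ ℕ} (h : lam ≠ 0) (c : R) :
    constantCoeff (σ := σ) (R := R) (1 - monomial (R := R) lam c) = 1 := by
  classical
  rw [map_sub, map_one, ← coeff_zero_eq_constantCoeff_apply, MvPowerSeries.coeff_monomial,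
    if_neg (by simpa using Ne.symm h)]
  ring

lemma invOfUnit_u {lam : σ →₀ ℕ} (h : lam ≠ 0) (c : R) :
    invOfUnit (1 - monomial (R := R) lam c) 1 = geomS lam c :=
  inv_unique' (mul_inv_one (constantCoeff_u h c)) (u_mul_geomS h c)

lemma Dop_u {lam : σ →₀ ℕ} (h : lam ≠ 0) (c : R) :
    Dop (1 - monomial (R := R) lam c) = monomial (R := R) lam (-(htv lam : R) * c) := by
  classical
  ext a
  rw [coeff_Dop, map_sub, coeff_one, MvPowerSeries.coeff_monomial, MvPowerSeries.coeff_monomial]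
  split_ifs with h1 h2 h2
  · exact absurd (h1 ▸ h2) (Ne.symm h)
  · subst h1; simp
  · subst h2; ring
  · ring

open Classical in
lemma coeff_Dlog_u {lam : σ →₀ ℕ} (h : lam ≠ 0) (c : R) (d : σ →₀ ℕ) :
    coeff (R := R) d (Dlog (1 - monomial (R := R) lam c)) =
      if (∃ k : ℕ, 0 < k ∧ d = k • lam) then -(htv lam : R) * c ^ (htv d / htv lam) else 0 := by
  classical
  rw [Dlog, invOfUnit_u h c, Dop_u h c, MvPowerSeries.coeff_monomial_mul]
  by_cases h2 : ∃ k : ℕ, 0 < k ∧ d = k • lam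
  · rw [if_pos h2]
    obtain ⟨k, hk, rfl⟩ := h2
    obtain ⟨j, rfl⟩ : ∃ j, k = j + 1 := ⟨k - 1, by omega⟩
    rw [if_pos (le_succ_smul lam j), succ_smul_sub, coeff_geomS_smul h, htv_div lam h, pow_succ]
    ring
  · rw [if_neg h2]
    by_cases h1 : lam ≤ d
    · rw [if_pos h1]
      have : ¬ ∃ k : ℕ, d - lam = k • lam := by
        rintro ⟨k, hk⟩
        exact h2 ⟨k + 1, by omega, by rw [← tsub_add_cancel_of_le h1, hk, succ_nsmul]⟩
      rw [coeff_geomS_of_not c this]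
      ring
    · rw [if_neg h1]

end geom

section supp
variable {σ : Type*} {R : Type*} [CommRing R]

/-- All nonzero coefficients sit at multiples of `lam`. -/
def MultOf (lam : σ →₀ ℕ) (h : MvPowerSeries σ R) : Prop :=
  ∀ ν, coeff (R := R) ν h ≠ 0 → ∃ k : ℕ, ν = k • lam

lemma multOf_one (lam : σ →₀ ℕ) : MultOf lam (1 : MvPowerSeries σ R) := by
  classical
  intro ν hν
  rw [coeff_one] at hν
  refine ⟨0, ?_⟩
  by_contra hn
  rw [if_neg (by simpa using hn)] at hν
  exact hν rfl

lemma multOf_mul {lam : σ →₀ ℕ} {f g : MvPowerSeries σ R} (hf : MultOf lam f)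
    (hg : MultOf lam g) : MultOf lam (f * g) := by
  classical
  intro ν hν
  rw [coeff_mul] at hν
  obtain ⟨p, hp, hne⟩ := Finset.exists_ne_zero_of_sum_ne_zero hν
  rw [Finset.HasAntidiagonal.mem_antidiagonal] at hp
  obtain ⟨k1, h1⟩ := hf p.1 (left_ne_zero_of_mul hne)
  obtain ⟨k2, h2⟩ := hg p.2 (right_ne_zero_of_mul hne)
  exact ⟨k1 + k2, by rw [← hp, h1, h2, add_nsmul]⟩

lemma multOf_pow {lam : σ →₀ ℕ} {f : MvPowerSeries σ R} (hf : MultOf lam f) (n : ℕ) :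
    MultOf lam (f ^ n) := by
  induction n with
  | zero => simpa using multOf_one lam
  | succ k ih => rw [pow_succ]; exact multOf_mul ih hf

lemma multOf_u (lam : σ →₀ ℕ) (c : R) : MultOf lam (1 - monomial (R := R) lam c) := by
  classical
  intro ν hν
  rw [map_sub, coeff_one, MvPowerSeries.coeff_monomial] at hν
  by_cases h0 : ν = 0
  · exact ⟨0, by simp [h0]⟩
  · by_cases h1 : ν = lam
    · exact ⟨1, by simp [h1]⟩
    · rw [if_neg (by simpa using h0), if_neg h1] at hν
      simp at hν

lemma multOf_geomS (lam : σ →₀ ℕ) (c : R) : MultOf lam (geomS lam c) := by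
  intro ν hν
  rw [coeff_geomS] at hν
  by_contra hn
  rw [if_neg hn] at hν
  exact hν rfl

lemma multOf_zpow {lam : σ →₀ ℕ} (h : lam ≠ 0) (c : R) (k : ℤ) :
    MultOf lam (zpowSeries (1 - monomial (R := R) lam c) k) := by
  rw [zpowSeries]
  split_ifs
  · exact multOf_pow (multOf_u lam c) _
  · rw [invOfUnit_u h c]
    exact multOf_pow (multOf_geomS lam c) _

lemma constantCoeff_zpow {f : MvPowerSeries σ R} (hf : constantCoeff (σ := σ) (R := R) f = 1) (k : ℤ) :
    constantCoeff (σ := σ) (R := R) (zpowSeries f k) = 1 := by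
  rw [zpowSeries]
  split_ifs
  · rw [map_pow, hf, one_pow]
  · rw [map_pow, constantCoeff_inv_one, one_pow]

/-- a nonzero coefficient of a series supported on multiples of `lam ≠ 0` is at `0` or above
`lam`. -/
lemma multOf_le {lam : σ →₀ ℕ} (hl : lam ≠ 0) {f : MvPowerSeries σ R} (hf : MultOf lam f)
    {ν : σ →₀ ℕ} (hν : coeff (R := R) ν f ≠ 0) : ν = 0 ∨ lam ≤ ν := by
  obtain ⟨k, rfl⟩ := hf ν hν
  cases k with
  | zero => exact Or.inl (by simp)
  | succ j => exact Or.inr (le_succ_smul lam j)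

/-- coefficients of a product over a finset `T`, where each factor is supported on multiples of
its index: nonzero coefficients are at `0` or above some element of `T`. -/
lemma prod_coeff_support {T : Finset (σ →₀ ℕ)} (hT : ∀ lam ∈ T, lam ≠ 0)
    {F : (σ →₀ ℕ) → MvPowerSeries σ R} (hF : ∀ lam ∈ T, MultOf lam (F lam))
    {ν : σ →₀ ℕ} (hν : coeff (R := R) ν (∏ lam ∈ T, F lam) ≠ 0) :
    ν = 0 ∨ ∃ lam ∈ T, lam ≤ ν := by
  classical
  induction T using Finset.induction_on generalizing ν with
  | empty =>
      left
      by_contra h0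
      rw [Finset.prod_empty, coeff_one, if_neg (by simpa using h0)] at hν
      exact hν rfl
  | insert a s hx ih =>
      rw [Finset.prod_insert hx, coeff_mul] at hν
      obtain ⟨p, hp, hne⟩ := Finset.exists_ne_zero_of_sum_ne_zero hν
      rw [Finset.HasAntidiagonal.mem_antidiagonal] at hp
      have h1 := multOf_le (hT a (Finset.mem_insert_self a s))
        (hF a (Finset.mem_insert_self a s)) (left_ne_zero_of_mul hne)
      have h2 := ih (fun lam hl => hT lam (Finset.mem_insert_of_mem hl))
        (fun lam hl => hF lam (Finset.mem_insert_of_mem hl)) (right_ne_zero_of_mul hne)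
      rcases h1 with h1 | h1
      · rcases h2 with h2 | h2
        · left; rw [← hp, h1, h2, add_zero]
        · right
          obtain ⟨lam, hls, hle⟩ := h2
          exact ⟨lam, Finset.mem_insert_of_mem hls, hle.trans (by rw [← hp]; exact le_add_self)⟩
      · right
        exact ⟨a, Finset.mem_insert_self a s, h1.trans (by rw [← hp]; exact le_self_add)⟩

end supp

section trunc
variable {σ : Type*} {R : Type*} [CommRing R]

lemma coeff_mul_left_one {A B : MvPowerSeries σ R} {μ : σ →₀ ℕ} (hB0 : coeff (R := R) 0 B = 1)
    (hB : ∀ b : σ →₀ ℕ, b ≠ 0 → b ≤ μ → coeff (R := R) b B = 0) :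
    coeff (R := R) μ (B * A) = coeff (R := R) μ A := by
  classical
  rw [coeff_mul, Finset.sum_eq_single ((0 : σ →₀ ℕ), μ)]
  · simp [hB0]
  · intro p hp hne
    rw [Finset.HasAntidiagonal.mem_antidiagonal] at hp
    have hp1 : p.1 ≠ 0 := by
      intro h0
      exact hne (Prod.ext h0 (by rw [← hp, h0, zero_add]))
    rw [hB p.1 hp1 (by rw [← hp]; exact le_self_add), zero_mul]
  · intro h
    exact absurd (Finset.HasAntidiagonal.mem_antidiagonal.2 (zero_add μ)) h

open Classical in
lemma coeff_prod_trunc [Fintype σ] (F : (σ →₀ ℕ) → MvPowerSeries σ R)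
    (hF1 : ∀ lam : σ →₀ ℕ, lam ≠ 0 → constantCoeff (σ := σ) (R := R) (F lam) = 1)
    (hFm : ∀ lam : σ →₀ ℕ, lam ≠ 0 → MultOf lam (F lam))
    {μ d : σ →₀ ℕ} (hμ : μ ≤ d) :
    coeff (R := R) μ (∏ lam ∈ (Finset.Iic d).erase 0, F lam) =
      coeff (R := R) μ (∏ lam ∈ (Finset.Iic μ).erase 0, F lam) := by
  have hsub : (Finset.Iic μ).erase 0 ⊆ (Finset.Iic d).erase 0 := by
    intro x hx
    simp only [Finset.mem_erase, Finset.mem_Iic] at hx ⊢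
    exact ⟨hx.1, hx.2.trans hμ⟩
  rw [← Finset.prod_sdiff hsub]
  refine coeff_mul_left_one ?_ ?_
  · rw [coeff_zero_eq_constantCoeff_apply, map_prod]
    exact Finset.prod_eq_one fun x hx =>
      hF1 x (Finset.mem_erase.1 (Finset.mem_sdiff.1 hx).1).1
  · intro b hb0 hble
    by_contra hval
    have hT : ∀ lam ∈ (Finset.Iic d).erase 0 \ (Finset.Iic μ).erase 0, lam ≠ 0 :=
      fun lam hl => (Finset.mem_erase.1 (Finset.mem_sdiff.1 hl).1).1
    rcases prod_coeff_support hT (fun lam hl => hFm lam (hT lam hl)) hval with h0 | hex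
    · exact hb0 h0
    · obtain ⟨lam, hls, hle⟩ := hex
      obtain ⟨hl1, hl2⟩ := Finset.mem_sdiff.1 hls
      exact hl2 (Finset.mem_erase.2 ⟨(Finset.mem_erase.1 hl1).1,
        Finset.mem_Iic.2 (hle.trans hble)⟩)

end trunc

section lists
variable {σ : Type*} {R : Type*} [CommRing R]

def LSet (μ : σ →₀ ℕ) : Set (List (σ →₀ ℕ)) := {l | (∀ x ∈ l, x ≠ 0) ∧ l.sum = μ}

lemma mem_le_sum {l : List (σ →₀ ℕ)} {x : σ →₀ ℕ} (hx : x ∈ l) : x ≤ l.sum := by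
  induction l with
  | nil => cases hx
  | cons a t ih =>
      rw [List.sum_cons]
      rcases List.mem_cons.1 hx with rfl | h
      · exact le_self_add
      · exact (ih h).trans le_add_self

lemma length_le_htv {l : List (σ →₀ ℕ)} (h : ∀ x ∈ l, x ≠ 0) : l.length ≤ htv l.sum := by
  induction l with
  | nil => simp
  | cons a t ih =>
      rw [List.sum_cons, htv_add, List.length_cons]
      have h1 : 1 ≤ htv a := htv_pos (h a (List.mem_cons_self))
      have h2 := ih fun x hx => h x (List.mem_cons_of_mem a hx)
      omega

lemma LSet_finite (μ : σ →₀ ℕ) : (LSet μ).Finite := by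
  classical
  have hsub : LSet μ ⊆
      (fun l : List ↥(↑(Finset.Iic μ) : Set (σ →₀ ℕ)) => l.map Subtype.val) ''
        {l | l.length ≤ htv μ} := by
    rintro l ⟨h0, rfl⟩
    refine ⟨l.attach.map (fun x => ⟨x.1, ?_⟩), ?_, ?_⟩
    · exact Finset.mem_coe.2 (Finset.mem_Iic.2 (mem_le_sum x.2))
    · simpa using length_le_htv h0
    · dsimp only
      rw [List.map_map]
      exact (List.attach_map_val (l := l) (f := id)).trans (List.map_id l)
  exact ((List.finite_length_le _ _).image _).subset hsub

noncomputable def LFin (μ : σ →₀ ℕ) : Finset (List (σ →₀ ℕ)) := (LSet_finite μ).toFinset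

lemma mem_LFin {μ : σ →₀ ℕ} {l : List (σ →₀ ℕ)} :
    l ∈ LFin μ ↔ (∀ x ∈ l, x ≠ 0) ∧ l.sum = μ := by
  rw [LFin, Set.Finite.mem_toFinset]; rfl

lemma LFin_zero : LFin (0 : σ →₀ ℕ) = {[]} := by
  ext l
  rw [mem_LFin, Finset.mem_singleton]
  constructor
  · rintro ⟨h0, hs⟩
    cases l with
    | nil => rfl
    | cons a t =>
        have ha : a ≤ (a :: t).sum := mem_le_sum (List.mem_cons_self)
        rw [hs] at ha
        exact absurd (nonpos_iff_eq_zero.1 ha) (h0 a (List.mem_cons_self))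
  · rintro rfl
    exact ⟨by simp, rfl⟩

open Classical in
lemma LFin_peel [Fintype σ] {μ : σ →₀ ℕ} (hμ : μ ≠ 0) (W : List (σ →₀ ℕ) → R) :
    ∑ l ∈ LFin μ, W l =
      ∑ a ∈ (Finset.Iic μ).erase 0, ∑ t ∈ LFin (μ - a), W (a :: t) := by
  classical
  rw [Finset.sum_sigma']
  refine (Finset.sum_nbij' (fun l => (⟨l.headI, l.tail⟩ : Σ _ : σ →₀ ℕ, List (σ →₀ ℕ)))
    (fun x => x.1 :: x.2) ?_ ?_ ?_ ?_ ?_)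
  · intro l hl
    rw [mem_LFin] at hl
    obtain ⟨h0, hs⟩ := hl
    cases l with
    | nil => exact absurd hs.symm hμ
    | cons a t =>
        simp only [Finset.mem_sigma, Finset.mem_erase, Finset.mem_Iic, List.headI, List.tail_cons]
        have ha : a ≤ μ := by rw [← hs]; exact mem_le_sum (List.mem_cons_self)
        refine ⟨⟨h0 a (List.mem_cons_self), ha⟩, ?_⟩
        rw [mem_LFin]
        refine ⟨fun x hx => h0 x (List.mem_cons_of_mem a hx), ?_⟩
        rw [List.sum_cons] at hs
        rw [← hs, add_tsub_cancel_left]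
  · intro x hx
    simp only [Finset.mem_sigma, Finset.mem_erase, Finset.mem_Iic] at hx
    obtain ⟨⟨hx0, hxle⟩, hx2⟩ := hx
    rw [mem_LFin] at hx2 ⊢
    obtain ⟨h0, hs⟩ := hx2
    constructor
    · intro y hy
      rcases List.mem_cons.1 hy with rfl | h
      · exact hx0
      · exact h0 y h
    · rw [List.sum_cons, hs, add_tsub_cancel_of_le hxle]
  · intro l hl
    rw [mem_LFin] at hl
    cases l with
    | nil => exact absurd hl.2.symm hμ
    | cons a t => rfl
  · intro x _
    rfl
  · intro l hl
    rw [mem_LFin] at hl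
    cases l with
    | nil => exact absurd hl.2.symm hμ
    | cons a t => rfl

end lists

section NSsec
variable {σ : Type*} {R : Type*} [CommRing R]

noncomputable def NS (P : (σ →₀ ℕ) → R) (μ : σ →₀ ℕ) : R :=
  ∑ l ∈ LFin μ, (-1 : R) ^ l.length * (l.map P).prod

lemma NS_zero (P : (σ →₀ ℕ) → R) : NS P 0 = 1 := by
  rw [NS, LFin_zero]
  simp

lemma NS_congr {P Q : (σ →₀ ℕ) → R} {μ : σ →₀ ℕ} (h : ∀ a ≤ μ, P a = Q a) :
    NS P μ = NS Q μ := by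
  refine Finset.sum_congr rfl fun l hl => ?_
  rw [mem_LFin] at hl
  have : l.map P = l.map Q := List.map_congr_left fun x hx => h x (hl.2 ▸ mem_le_sum hx)
  rw [this]

open Classical in
lemma NS_peel [Fintype σ] {μ : σ →₀ ℕ} (hμ : μ ≠ 0) (P : (σ →₀ ℕ) → R) :
    NS P μ = -∑ a ∈ (Finset.Iic μ).erase 0, P a * NS P (μ - a) := by
  rw [NS, LFin_peel hμ, ← Finset.sum_neg_distrib]
  refine Finset.sum_congr rfl fun a _ => ?_
  rw [NS, Finset.mul_sum, ← Finset.sum_neg_distrib]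
  refine Finset.sum_congr rfl fun t _ => ?_
  rw [List.map_cons, List.prod_cons, List.length_cons, pow_succ]
  ring

lemma sum_antidiagonal_eq_sum_Iic [DecidableEq σ] (μ : σ →₀ ℕ)
    (G : (σ →₀ ℕ) × (σ →₀ ℕ) → R) :
    ∑ p ∈ Finset.HasAntidiagonal.antidiagonal μ, G p = ∑ a ∈ Finset.Iic μ, G (a, μ - a) := by
  refine Finset.sum_nbij' (fun p => p.1) (fun a => (a, μ - a)) ?_ ?_ ?_ ?_ ?_
  · intro p hp
    rw [Finset.HasAntidiagonal.mem_antidiagonal] at hp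
    rw [Finset.mem_Iic, ← hp]
    exact le_self_add
  · intro a ha
    rw [Finset.mem_Iic] at ha
    rw [Finset.HasAntidiagonal.mem_antidiagonal]
    exact add_tsub_cancel_of_le ha
  · intro p hp
    rw [Finset.HasAntidiagonal.mem_antidiagonal] at hp
    have : μ - p.1 = p.2 := by rw [← hp, add_tsub_cancel_left]
    exact Prod.ext rfl this
  · intro a _
    rfl
  · intro p hp
    rw [Finset.HasAntidiagonal.mem_antidiagonal] at hp
    have h2 : μ - p.1 = p.2 := by rw [← hp, add_tsub_cancel_left]
    rw [show ((p.1, μ - p.1) : (σ →₀ ℕ) × (σ →₀ ℕ)) = p from Prod.ext rfl h2]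

noncomputable def VS (g : MvPowerSeries σ R) : MvPowerSeries σ R :=
  fun μ => NS (fun a => coeff (R := R) a g) μ

lemma coeff_VS (g : MvPowerSeries σ R) (μ : σ →₀ ℕ) :
    coeff (R := R) μ (VS g) = NS (fun a => coeff (R := R) a g) μ := rfl

lemma mul_VS [Fintype σ] {g : MvPowerSeries σ R} (hg : constantCoeff (σ := σ) (R := R) g = 1) :
    g * VS g = 1 := by
  ext μ
  classical
  rw [coeff_mul, coeff_one]
  by_cases hμ : μ = 0
  · subst hμ
    rw [if_pos rfl, Finsupp.antidiagonal_zero, Finset.sum_singleton]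
    have h1 : coeff (R := R) 0 g = 1 := by rw [coeff_zero_eq_constantCoeff_apply, hg]
    have h2 : coeff (R := R) 0 (VS g) = 1 := by rw [coeff_VS, NS_zero]
    simp [h1, h2]
  · rw [if_neg hμ, sum_antidiagonal_eq_sum_Iic,
      ← Finset.add_sum_erase _ _ (Finset.mem_Iic.2 (zero_le : 0 ≤ μ))]
    have h1 : coeff (R := R) 0 g = 1 := by rw [coeff_zero_eq_constantCoeff_apply, hg]
    have h2 : coeff (R := R) μ (VS g) = NS (fun a => coeff (R := R) a g) μ := rfl
    rw [h1, one_mul, tsub_zero, h2, NS_peel hμ]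
    rw [add_comm, ← sub_eq_add_neg, sub_eq_zero]
    refine Finset.sum_congr ?_ fun x _ => rfl
    congr!

lemma invOfUnit_eq_VS [Fintype σ] {g : MvPowerSeries σ R} (hg : constantCoeff (σ := σ) (R := R) g = 1) :
    invOfUnit g 1 = VS g :=
  inv_unique' (mul_inv_one hg) (mul_VS hg)

lemma Dlog_prod {ι : Type*} (T : Finset ι) (F : ι → MvPowerSeries σ R)
    (h1 : ∀ x ∈ T, constantCoeff (σ := σ) (R := R) (F x) = 1) :
    Dlog (∏ x ∈ T, F x) = ∑ x ∈ T, Dlog (F x) := by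
  classical
  induction T using Finset.induction_on with
  | empty => simpa using Dlog_one
  | insert a s hx ih =>
      rw [Finset.prod_insert hx, Finset.sum_insert hx,
        Dlog_mul (h1 a (Finset.mem_insert_self a s)) ?_, ih ?_]
      · intro x hxs; exact h1 x (Finset.mem_insert_of_mem hxs)
      · rw [map_prod]
        exact Finset.prod_eq_one fun x hxs => h1 x (Finset.mem_insert_of_mem hxs)

end NSsec

open Classical in
lemma sum_Iic_split {σ : Type*} {R : Type*} [CommRing R] [Fintype σ] (d : σ →₀ ℕ)
    (G : (σ →₀ ℕ) → R) :
    ∑ a ∈ Finset.Iic d, G a = G 0 + ∑ a ∈ (Finset.Iic d).erase 0, G a :=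
  (Finset.add_sum_erase _ _ (Finset.mem_Iic.2 (zero_le : 0 ≤ d))).symm

open Classical in
/-- **Coefficient comparison of the two expressions for `D(Σ)/Σ`** (proof of Theorem 5.1,
just before Möbius inversion): if `f ∈ MvPowerSeries σ ℤ[t]` has constant coefficient `1`
and product-form exponent family `m`, and `P_λ` denotes the coefficient of `X^λ` in `f`,
then for every nonzero `d`:
`∑_{(k,κ) : d = k·κ} ht(κ)·∑_n m(κ,n) t^{kn} = ∑ (-1)^r · ht(λ₁) · ∏ᵢ P_{λᵢ}`,
the right sum running over nonempty lists `(λ₁,…,λ_r)` of nonzero exponent vectors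
summing to `d`. -/
theorem stmt_9 (σ : Type*) [Fintype σ]
    (f : MvPowerSeries σ (Polynomial ℤ))
    (hf : MvPowerSeries.constantCoeff (σ := σ) (R := Polynomial ℤ) f = 1)
    (m : (σ →₀ ℕ) → (ℕ →₀ ℤ)) (hm0 : m 0 = 0)
    (hm : ∀ d : σ →₀ ℕ, MvPowerSeries.coeff (R := Polynomial ℤ) d f =
      MvPowerSeries.coeff (R := Polynomial ℤ) d
        (∏ lam ∈ (Finset.Iic d).erase 0, ∏ n ∈ (m lam).support,
          zpowSeries (1 - MvPowerSeries.monomial (R := Polynomial ℤ) lam (Polynomial.X ^ n))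
            (m lam n))) :
    ∀ d : σ →₀ ℕ, d ≠ 0 →
      (∑ᶠ p ∈ {p : ℕ × (σ →₀ ℕ) | 0 < p.1 ∧ p.2 ≠ 0 ∧ d = p.1 • p.2},
        (htv p.2 : Polynomial ℤ) *
          ((m p.2).sum fun n c => c • (Polynomial.X : Polynomial ℤ) ^ (p.1 * n))) =
      ∑ᶠ l ∈ {l : List (σ →₀ ℕ) | l ≠ [] ∧ (∀ x ∈ l, x ≠ 0) ∧ l.sum = d},
        (-1 : Polynomial ℤ) ^ l.length * (htv l.headI : Polynomial ℤ) *
          (l.map fun lam => MvPowerSeries.coeff (R := Polynomial ℤ) lam f).prod := by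
  intro d hd
  set P : (σ →₀ ℕ) → Polynomial ℤ := fun lam => MvPowerSeries.coeff (R := Polynomial ℤ) lam f
    with hPdef
  set F : (σ →₀ ℕ) → MvPowerSeries σ (Polynomial ℤ) := fun lam =>
    ∏ n ∈ (m lam).support,
      zpowSeries (1 - MvPowerSeries.monomial (R := Polynomial ℤ) lam (Polynomial.X ^ n)) (m lam n)
    with hFdef
  set S : Finset (σ →₀ ℕ) := (Finset.Iic d).erase 0 with hS
  set g : MvPowerSeries σ (Polynomial ℤ) := ∏ lam ∈ S, F lam with hgdef
  -- basic facts
  have hF1 : ∀ lam : σ →₀ ℕ, lam ≠ 0 → constantCoeff (σ := σ) (R := Polynomial ℤ) (F lam) = 1 := by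
    intro lam hl
    rw [hFdef, map_prod]
    exact Finset.prod_eq_one fun n _ => constantCoeff_zpow (constantCoeff_u hl _) _
  have hFm : ∀ lam : σ →₀ ℕ, lam ≠ 0 → MultOf lam (F lam) := by
    intro lam hl
    rw [hFdef]
    exact Finset.prod_induction _ (MultOf lam) (fun a b ha hb => multOf_mul ha hb)
      (multOf_one lam) (fun n _ => multOf_zpow hl _ _)
  have hmemS : ∀ lam ∈ S, lam ≠ 0 ∧ lam ≤ d := by
    intro lam hls
    rw [hS, Finset.mem_erase, Finset.mem_Iic] at hls
    exact hls
  have hgcc : constantCoeff (σ := σ) (R := Polynomial ℤ) g = 1 := by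
    rw [hgdef, map_prod]
    exact Finset.prod_eq_one fun lam hls => hF1 lam (hmemS lam hls).1
  have hPg : ∀ μ : σ →₀ ℕ, μ ≤ d → coeff (R := Polynomial ℤ) μ g = P μ := by
    intro μ hμ
    rw [hgdef, hS, coeff_prod_trunc F hF1 hFm hμ]
    exact (hm μ).symm
  classical
  -- the logarithmic derivative of g, coefficient at d, product-form computation
  have hfac : ∀ lam ∈ S, coeff (R := Polynomial ℤ) d (Dlog (F lam)) =
      if ∃ k : ℕ, 0 < k ∧ d = k • lam then
        -((htv lam : Polynomial ℤ) *
          ((m lam).sum fun n c =>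
            c • (Polynomial.X : Polynomial ℤ) ^ ((htv d / htv lam) * n)))
      else 0 := by
    intro lam hls
    have hl : lam ≠ 0 := (hmemS lam hls).1
    rw [Dlog_prod _ _ (fun n _ => constantCoeff_zpow (constantCoeff_u hl _) _), map_sum]
    have hterm : ∀ n ∈ (m lam).support,
        coeff (R := Polynomial ℤ) d
          (Dlog (zpowSeries
            (1 - MvPowerSeries.monomial (R := Polynomial ℤ) lam (Polynomial.X ^ n)) (m lam n))) =
        (m lam n) • (if ∃ k : ℕ, 0 < k ∧ d = k • lam then
          -(htv lam : Polynomial ℤ) * (Polynomial.X ^ n) ^ (htv d / htv lam) else 0) := by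
      intro n _
      rw [Dlog_zpow (constantCoeff_u hl _), map_zsmul, coeff_Dlog_u hl]
    rw [Finset.sum_congr rfl hterm]
    split_ifs with hcond
    · rw [Finsupp.sum, Finset.mul_sum, ← Finset.sum_neg_distrib]
      refine Finset.sum_congr rfl fun n _ => ?_
      rw [← pow_mul, Nat.mul_comm n (htv d / htv lam), neg_mul, smul_neg, mul_smul_comm]
    · exact Finset.sum_eq_zero fun n _ => smul_zero _
  -- LHS computation
  set E : Finset (ℕ × (σ →₀ ℕ)) :=
    ((Finset.Icc 1 (htv d)) ×ˢ S).filter (fun p => d = p.1 • p.2) with hE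
  have hsetE : {p : ℕ × (σ →₀ ℕ) | 0 < p.1 ∧ p.2 ≠ 0 ∧ d = p.1 • p.2} = ↑E := by
    ext p
    simp only [Set.mem_setOf_eq, hE, Finset.coe_filter, Finset.mem_product, Finset.mem_Icc,
      Set.mem_setOf_eq]
    constructor
    · rintro ⟨h1, h2, h3⟩
      have hhtv : htv d = p.1 * htv p.2 := by rw [h3, htv_smul]
      have hp2 : 0 < htv p.2 := htv_pos h2
      refine ⟨⟨⟨h1, ?_⟩, ?_⟩, h3⟩
      · calc p.1 ≤ p.1 * htv p.2 := Nat.le_mul_of_pos_right _ hp2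
          _ = htv d := hhtv.symm
      · simp only [hS, Finset.mem_erase, Finset.mem_Iic]
        obtain ⟨j, hj⟩ : ∃ j, p.1 = j + 1 := ⟨p.1 - 1, by omega⟩
        exact ⟨h2, by rw [h3, hj]; exact le_succ_smul _ _⟩
    · rintro ⟨⟨⟨h1, _⟩, hps⟩, h3⟩
      exact ⟨h1, (hmemS _ hps).1, h3⟩
  have hLHS1 : (∑ᶠ p ∈ {p : ℕ × (σ →₀ ℕ) | 0 < p.1 ∧ p.2 ≠ 0 ∧ d = p.1 • p.2},
      (htv p.2 : Polynomial ℤ) *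
        ((m p.2).sum fun n c => c • (Polynomial.X : Polynomial ℤ) ^ (p.1 * n))) =
      ∑ p ∈ E, (htv p.2 : Polynomial ℤ) *
        ((m p.2).sum fun n c => c • (Polynomial.X : Polynomial ℤ) ^ (p.1 * n)) := by
    rw [hsetE, finsum_mem_coe_finset]
  have hLHS2 : (∑ p ∈ E, (htv p.2 : Polynomial ℤ) *
      ((m p.2).sum fun n c => c • (Polynomial.X : Polynomial ℤ) ^ (p.1 * n))) =
      ∑ lam ∈ S, (if ∃ k : ℕ, 0 < k ∧ d = k • lam then
        (htv lam : Polynomial ℤ) *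
          ((m lam).sum fun n c =>
            c • (Polynomial.X : Polynomial ℤ) ^ ((htv d / htv lam) * n))
      else 0) := by
    rw [← Finset.sum_filter]
    refine Finset.sum_nbij' (fun p => p.2) (fun lam => (htv d / htv lam, lam)) ?_ ?_ ?_ ?_ ?_
    · intro p hp
      simp only [hE, Finset.mem_filter, Finset.mem_product, Finset.mem_Icc] at hp
      obtain ⟨⟨⟨h1, _⟩, hps⟩, h3⟩ := hp
      rw [Finset.mem_filter]
      exact ⟨hps, p.1, h1, h3⟩
    · intro lam hlam
      rw [Finset.mem_filter] at hlam
      obtain ⟨hls, k, hk, heq⟩ := hlam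
      have hl : lam ≠ 0 := (hmemS lam hls).1
      have hdiv : htv d / htv lam = k := by rw [heq, htv_div lam hl]
      simp only [hE, Finset.mem_filter, Finset.mem_product, Finset.mem_Icc, hdiv]
      have hp2 : 0 < htv lam := htv_pos hl
      refine ⟨⟨⟨hk, ?_⟩, hls⟩, heq⟩
      calc k ≤ k * htv lam := Nat.le_mul_of_pos_right _ hp2
        _ = htv d := by rw [heq, htv_smul]
    · intro p hp
      simp only [hE, Finset.mem_filter, Finset.mem_product, Finset.mem_Icc] at hp
      obtain ⟨⟨_, hps⟩, h3⟩ := hp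
      have hdiv : htv d / htv p.2 = p.1 := by rw [h3, htv_div _ (hmemS _ hps).1]
      exact Prod.ext hdiv rfl
    · intro lam _
      rfl
    · intro p hp
      simp only [hE, Finset.mem_filter, Finset.mem_product, Finset.mem_Icc] at hp
      obtain ⟨⟨_, hps⟩, h3⟩ := hp
      have hdiv : htv d / htv p.2 = p.1 := by rw [h3, htv_div _ (hmemS _ hps).1]
      rw [hdiv]
  have hLHS3 : (∑ lam ∈ S, (if ∃ k : ℕ, 0 < k ∧ d = k • lam then
      (htv lam : Polynomial ℤ) *
        ((m lam).sum fun n c =>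
          c • (Polynomial.X : Polynomial ℤ) ^ ((htv d / htv lam) * n))
      else 0)) = -coeff (R := Polynomial ℤ) d (Dlog g) := by
    rw [hgdef, Dlog_prod S F (fun lam hls => hF1 lam (hmemS lam hls).1), map_sum,
      ← Finset.sum_neg_distrib]
    refine Finset.sum_congr rfl fun lam hls => ?_
    rw [hfac lam hls]
    split_ifs with hcond
    · rw [neg_neg]
    · rw [neg_zero]
  -- RHS computation
  have hsetL : {l : List (σ →₀ ℕ) | l ≠ [] ∧ (∀ x ∈ l, x ≠ 0) ∧ l.sum = d} = ↑(LFin d) := by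
    ext l
    simp only [Set.mem_setOf_eq, Finset.mem_coe, mem_LFin]
    constructor
    · rintro ⟨_, h2, h3⟩
      exact ⟨h2, h3⟩
    · rintro ⟨h2, h3⟩
      refine ⟨?_, h2, h3⟩
      rintro rfl
      exact hd (by simpa using h3.symm)
  have hRHS1 : (∑ᶠ l ∈ {l : List (σ →₀ ℕ) | l ≠ [] ∧ (∀ x ∈ l, x ≠ 0) ∧ l.sum = d},
      (-1 : Polynomial ℤ) ^ l.length * (htv l.headI : Polynomial ℤ) * (l.map P).prod) =
      ∑ l ∈ LFin d, (-1 : Polynomial ℤ) ^ l.length * (htv l.headI : Polynomial ℤ) *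
        (l.map P).prod := by
    rw [hsetL, finsum_mem_coe_finset]
  have hRHS2 : (∑ l ∈ LFin d, (-1 : Polynomial ℤ) ^ l.length *
      (htv l.headI : Polynomial ℤ) * (l.map P).prod) =
      -∑ a ∈ S, (htv a : Polynomial ℤ) * P a * NS P (d - a) := by
    rw [LFin_peel hd, ← hS, ← Finset.sum_neg_distrib]
    refine Finset.sum_congr rfl fun a _ => ?_
    rw [NS, Finset.mul_sum, ← Finset.sum_neg_distrib]
    refine Finset.sum_congr rfl fun t _ => ?_
    simp only [List.map_cons, List.prod_cons, List.length_cons, List.headI, pow_succ]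
    ring
  have hA : coeff (R := Polynomial ℤ) d (Dlog g) =
      ∑ a ∈ S, (htv a : Polynomial ℤ) * P a * NS P (d - a) := by
    simp only [Dlog]
    rw [invOfUnit_eq_VS hgcc, coeff_mul,
      sum_antidiagonal_eq_sum_Iic d
        (fun p => coeff (R := Polynomial ℤ) p.1 (Dop g) * coeff (R := Polynomial ℤ) p.2 (VS g)),
      sum_Iic_split, ← hS]
    have h0 : coeff (R := Polynomial ℤ) (((0 : σ →₀ ℕ), d - 0) : (σ →₀ ℕ) × (σ →₀ ℕ)).1 (Dop g)
        = 0 := by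
      rw [coeff_Dop]
      simp
    rw [h0, zero_mul, zero_add]
    refine Finset.sum_congr rfl fun a ha => ?_
    have haS := hmemS a ha
    have h1 : coeff (R := Polynomial ℤ) ((a, d - a) : (σ →₀ ℕ) × (σ →₀ ℕ)).1 (Dop g) =
        (htv a : Polynomial ℤ) * P a := by
      rw [coeff_Dop, hPg a haS.2]
    rw [h1]
    have h2 : coeff (R := Polynomial ℤ) ((a, d - a) : (σ →₀ ℕ) × (σ →₀ ℕ)).2 (VS g) =
        NS P (d - a) := by
      rw [coeff_VS]
      exact NS_congr fun b hb => hPg b (hb.trans (tsub_le_self))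
    rw [h2, mul_assoc]
  rw [hLHS1, hLHS2, hLHS3, hRHS1, hRHS2, hA]
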